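/- Let (c_n) ∈ ℓ²(ℝ) be strictly monotonically decreasing, let (p_n(0)) ∈ Δ, and define p_n(t) := p_n(0) e^{c_n t} / ∑_{k=0}^∞ p_k(0) e^{c_k t}. Then p(t) converges in the ℓ¹ norm, as t → ∞, to the point e_0 = (1, 0, 0, …) ∈ Δ̄, and e_0 maximizes the functional p ↦ ∑_{n=0}^∞ c_n p_n over the closed simplex Δ̄. -/

import Mathlib

/-- The ℓ²-probability simplex `Δ`. -/
def simplex : Set (ℕ → ℝ) :=
  {p | Summable p ∧ (∀ n, 0 < p n) ∧ ∑' n, p n = 1}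

/-- The closed ℓ²-probability simplex `Δ̄`. -/
def closedSimplex : Set (ℕ → ℝ) :=
  {p | Summable p ∧ (∀ n, 0 ≤ p n) ∧ ∑' n, p n = 1}

/-- The corner point `e₀ = (1, 0, 0, …)`. -/
def e0 : ℕ → ℝ := fun n => if n = 0 then 1 else 0

/-- The ℓ²-Fisher–Rao gradient flow. -/
noncomputable def flow (c p0 : ℕ → ℝ) (t : ℝ) (n : ℕ) : ℝ :=
  p0 n * Real.exp (c n * t) / ∑' k, p0 k * Real.exp (c k * t)

open Filter Real

lemma aux_tendsto_zero (c : ℕ → ℝ) (hc : Summable (fun n => c n ^ 2)) :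
    Tendsto c atTop (nhds 0) := by
  have h2 : Tendsto (fun n => c n ^ 2) atTop (nhds 0) := hc.tendsto_atTop_zero
  have habs : Tendsto (fun n => |c n|) atTop (nhds 0) := by
    have h := (Real.continuous_sqrt.tendsto 0).comp h2
    simp only [Real.sqrt_zero] at h
    refine h.congr fun n => ?_
    simp [Function.comp, Real.sqrt_sq_eq_abs]
  exact (tendsto_zero_iff_abs_tendsto_zero c).mpr habs

lemma aux_pos (c : ℕ → ℝ) (hc : Summable (fun n => c n ^ 2)) (hmono : StrictAnti c) :
    ∀ n, 0 < c n := by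
  intro n
  have h0 : Tendsto c atTop (nhds 0) := aux_tendsto_zero c hc
  have h1 : (0 : ℝ) ≤ c (n + 1) := by
    refine le_of_tendsto h0 ?_
    filter_upwards [eventually_ge_atTop (n + 1)] with m hm
    exact hmono.antitone hm
  have : c (n + 1) < c n := hmono (Nat.lt_succ_self n)
  linarith

/-- e₀ is summable. -/
lemma e0_summable : Summable e0 := by
  apply summable_of_ne_finset_zero (s := {0})
  intro n hn
  simp only [Finset.mem_singleton] at hn
  simp [e0, hn]

theorem flow_converges_to_maximizer (c p0 : ℕ → ℝ)
    (hc : Summable (fun n => c n ^ 2)) (hmono : StrictAnti c) (hp0 : p0 ∈ simplex) :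
    Filter.Tendsto (fun t => ∑' n, |flow c p0 t n - e0 n|) Filter.atTop (nhds 0) ∧
    e0 ∈ closedSimplex ∧
    ∀ r ∈ closedSimplex, (∑' n, c n * r n) ≤ ∑' n, c n * e0 n := by
  obtain ⟨hs, hpos, hsum1⟩ := hp0
  have hcpos : ∀ n, 0 < c n := aux_pos c hc hmono
  have hcle : ∀ n, c n ≤ c 0 := fun n => hmono.antitone (Nat.zero_le n)
  have he0sum : ∑' n, e0 n = 1 := by
    simpa [e0] using tsum_ite_eq (0 : ℕ) (1 : ℝ)
  refine ⟨?_, ⟨e0_summable, fun n => by unfold e0; positivity, he0sum⟩, ?_⟩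
  · -- convergence part
    set g : ℝ → ℝ := fun t => ∑' k, p0 (k + 1) * Real.exp ((c (k + 1) - c 0) * t) with hg
    have hgt : Tendsto g atTop (nhds 0) := by
      have h0 : (0 : ℝ) = ∑' (k : ℕ), (0 : ℝ) := by simp
      rw [hg, h0]
      apply tendsto_tsum_of_dominated_convergence (bound := fun k => p0 (k + 1))
      · exact (summable_nat_add_iff 1).mpr hs
      · intro k
        have ha : c (k + 1) - c 0 < 0 := by
          have := hmono (Nat.succ_pos k)
          linarith
        have h1 : Tendsto (fun t : ℝ => -((c (k + 1) - c 0)) * t) atTop atTop :=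
          tendsto_id.const_mul_atTop (by linarith)
        have h2 : Tendsto (fun t : ℝ => Real.exp ((c (k + 1) - c 0) * t)) atTop (nhds 0) := by
          refine (Real.tendsto_exp_neg_atTop_nhds_zero.comp h1).congr fun x => ?_
          simp only [Function.comp_apply]
          rw [neg_mul, neg_neg]
        simpa using h2.const_mul (p0 (k + 1))
      · filter_upwards [eventually_ge_atTop (0 : ℝ)] with t ht k
        have ha : c (k + 1) - c 0 ≤ 0 := by
          have := hmono (Nat.succ_pos k); linarith
        have hexp : Real.exp ((c (k + 1) - c 0) * t) ≤ 1 := by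
          apply Real.exp_le_one_iff.mpr
          exact mul_nonpos_of_nonpos_of_nonneg ha ht
        have h1 : 0 ≤ p0 (k + 1) * Real.exp ((c (k + 1) - c 0) * t) :=
          mul_nonneg (hpos _).le (Real.exp_pos _).le
        rw [Real.norm_eq_abs, abs_of_nonneg h1]
        nlinarith [(hpos (k + 1)).le]
    have hlim : Tendsto (fun t => (2 / p0 0) * g t) atTop (nhds 0) := by
      simpa using hgt.const_mul (2 / p0 0)
    apply squeeze_zero' ?_ ?_ hlim
    · filter_upwards with t
      exact tsum_nonneg fun n => abs_nonneg _
    · filter_upwards [eventually_ge_atTop (0 : ℝ)] with t ht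
      set Z : ℝ := ∑' k, p0 k * Real.exp (c k * t) with hZ
      have hterm_pos : ∀ k, 0 < p0 k * Real.exp (c k * t) := fun k =>
        mul_pos (hpos k) (Real.exp_pos _)
      have hZs : Summable (fun k => p0 k * Real.exp (c k * t)) := by
        refine Summable.of_nonneg_of_le (fun k => (hterm_pos k).le) (fun k => ?_)
          (hs.mul_right (Real.exp (c 0 * t)))
        exact mul_le_mul_of_nonneg_left
          (Real.exp_le_exp.mpr (mul_le_mul_of_nonneg_right (hcle k) ht)) (hpos k).le
      have hZ0le : p0 0 * Real.exp (c 0 * t) ≤ Z := Summable.le_tsum hZs 0 fun k _ => (hterm_pos k).le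
      have hZpos : 0 < Z := lt_of_lt_of_le (hterm_pos 0) hZ0le
      have hflow_eq : ∀ n, flow c p0 t n = p0 n * Real.exp (c n * t) / Z := fun n => rfl
      have hflow_s : Summable (flow c p0 t) := by
        exact hZs.div_const Z
      have hflow_pos : ∀ n, 0 < flow c p0 t n := fun n => div_pos (hterm_pos n) hZpos
      have hflow_sum : ∑' n, flow c p0 t n = 1 := by
        rw [show (fun n => flow c p0 t n) = fun n => p0 n * Real.exp (c n * t) / Z from rfl,
          tsum_div_const, ← hZ, div_self hZpos.ne']
      have hZsplit : Z = p0 0 * Real.exp (c 0 * t) + ∑' k, p0 (k + 1) * Real.exp (c (k + 1) * t) :=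
        Summable.tsum_eq_zero_add hZs
      set T : ℝ := ∑' k, p0 (k + 1) * Real.exp (c (k + 1) * t) with hT
      have hTnonneg : 0 ≤ T := tsum_nonneg fun k => (hterm_pos (k + 1)).le
      have hflow0 : flow c p0 t 0 = p0 0 * Real.exp (c 0 * t) / Z := rfl
      have h1mflow0 : 1 - flow c p0 t 0 = T / Z := by
        rw [hflow0]
        field_simp
        linarith [hZsplit]
      -- compute the ℓ¹ distance
      have hsd : Summable (fun n => |flow c p0 t n - e0 n|) := (hflow_s.sub e0_summable).abs
      have hA : ∑' n, |flow c p0 t n - e0 n| = 2 * (1 - flow c p0 t 0) := by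
        rw [Summable.tsum_eq_zero_add hsd]
        have h1 : ∀ k : ℕ, |flow c p0 t (k + 1) - e0 (k + 1)| = flow c p0 t (k + 1) := by
          intro k
          simp only [e0, Nat.succ_ne_zero, if_false, sub_zero]
          exact abs_of_pos (hflow_pos (k + 1))
        have h2 : ∑' k, |flow c p0 t (k + 1) - e0 (k + 1)| = 1 - flow c p0 t 0 := by
          simp_rw [h1]
          have := Summable.tsum_eq_zero_add hflow_s
          rw [hflow_sum] at this
          linarith
        rw [h2]
        have hflow0le : flow c p0 t 0 ≤ 1 := by
          rw [hflow0]; exact div_le_one_of_le₀ hZ0le hZpos.le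
        have he00 : e0 0 = 1 := by simp [e0]
        have : |flow c p0 t 0 - e0 0| = 1 - flow c p0 t 0 := by
          rw [he00, abs_sub_comm]
          exact abs_of_nonneg (by linarith)
        rw [this]; ring
      rw [hA, h1mflow0]
      -- T = exp(c 0 * t) * g t
      have hTg : T = Real.exp (c 0 * t) * g t := by
        rw [hT, hg, ← tsum_mul_left]
        congr 1
        funext k
        rw [mul_comm (Real.exp (c 0 * t)), mul_assoc, ← Real.exp_add]
        ring_nf
      have hdiv : T / Z ≤ g t / p0 0 := by
        have h1 : T / Z ≤ T / (p0 0 * Real.exp (c 0 * t)) :=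
          div_le_div_of_nonneg_left hTnonneg (hterm_pos 0) hZ0le
        have h2 : T / (p0 0 * Real.exp (c 0 * t)) = g t / p0 0 := by
          rw [hTg]
          rw [mul_comm (p0 0), mul_div_mul_left _ _ (Real.exp_pos _).ne']
        linarith
      have hp00 : 0 < p0 0 := hpos 0
      calc 2 * (T / Z) ≤ 2 * (g t / p0 0) := by linarith
        _ = 2 / p0 0 * g t := by ring
  · -- maximizer part
    intro r hr
    obtain ⟨hrs, hrpos, hrsum⟩ := hr
    have hce0 : ∑' n, c n * e0 n = c 0 := by
      have : (fun n => c n * e0 n) = fun n => if n = 0 then c 0 else 0 := by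
        funext n; by_cases h : n = 0 <;> simp [e0, h]
      rw [this]
      exact tsum_ite_eq (0 : ℕ) (fun _ => c 0)
    rw [hce0]
    have hsum_cr : Summable (fun n => c n * r n) := by
      exact Summable.of_nonneg_of_le (fun n => mul_nonneg (hcpos n).le (hrpos n))
        (fun n => mul_le_mul_of_nonneg_right (hcle n) (hrpos n)) (hrs.mul_left (c 0))
    calc ∑' n, c n * r n ≤ ∑' n, c 0 * r n :=
          Summable.tsum_le_tsum (fun n => mul_le_mul_of_nonneg_right (hcle n) (hrpos n))
            hsum_cr (hrs.mul_left _)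
      _ = c 0 := by rw [tsum_mul_left, hrsum, mul_one]
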